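/- Bubble integral identity: for n ≥ 1 and 0 < γ < n/2, ∫_{ℝⁿ} (1/|x-y|^{2γ}) (1/(1+|y|²))^{n-γ} dy = I(γ) (1/(1+|x|²))^{γ} for every x ∈ ℝⁿ, where I(γ) = π^{n/2} Γ((n-2γ)/2)/Γ(n-γ). -/

import Mathlib

open MeasureTheory Real

open Set

section BubbleAux

private lemma lint_gamma {s a : ℝ} (hs : 0 < s) (ha : 0 < a) :
    ∫⁻ t in Ioi (0:ℝ), ENNReal.ofReal (t ^ (s - 1) * Real.exp (-(a * t)))
      = ENNReal.ofReal (Real.Gamma s * a ^ (-s)) := by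
  rw [← MeasureTheory.ofReal_integral_eq_lintegral_ofReal]
  · congr 1
    have h := integral_rpow_mul_exp_neg_mul_rpow (p := 1) (q := s - 1) (b := a) one_pos
      (by linarith) ha
    simp only [Real.rpow_one, sub_add_cancel, div_one, one_div_one, neg_mul] at h
    rw [h]; ring
  · have h := integrableOn_rpow_mul_exp_neg_mul_rpow (s := s - 1) (p := 1) (by linarith) one_pos ha
    simp only [Real.rpow_one] at h
    refine h.congr_fun (fun t ht => by ring_nf) measurableSet_Ioi
  · filter_upwards [ae_restrict_mem measurableSet_Ioi] with t ht
    have : (0:ℝ) < t := ht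
    positivity

private lemma lint_scale (f : ℝ → ENNReal) (hf : Measurable f) {c : ℝ} (hc : 0 < c) :
    ∫⁻ u in Ioi (0:ℝ), f u = ENNReal.ofReal c * ∫⁻ s in Ioi (0:ℝ), f (c * s) := by
  have h0 : (volume : Measure ℝ) = ENNReal.ofReal |c| • Measure.map (c * ·) volume :=
    (Real.smul_map_volume_mul_left (ne_of_gt hc)).symm
  have hpre : ((c * ·) ⁻¹' (Ioi (0:ℝ))) = Ioi 0 := by
    ext t; simp only [mem_preimage, mem_Ioi]
    constructor
    · intro h
      by_contra hle
      push_neg at hle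
      nlinarith
    · exact fun h => mul_pos hc h
  calc ∫⁻ u in Ioi (0:ℝ), f u
      = ∫⁻ u, f u ∂((ENNReal.ofReal |c| • Measure.map (c * ·) volume).restrict (Ioi 0)) := by
        rw [← h0]
    _ = ENNReal.ofReal |c| * ∫⁻ u, f u ∂((Measure.map (c * ·) volume).restrict (Ioi 0)) := by
        rw [Measure.restrict_smul, lintegral_smul_measure, smul_eq_mul]
    _ = ENNReal.ofReal c * ∫⁻ s in Ioi (0:ℝ), f (c * s) := by
        rw [abs_of_pos hc, Measure.restrict_map (measurable_const_mul c) measurableSet_Ioi, hpre,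
          lintegral_map hf (measurable_const_mul c)]

private lemma lint_beta {a b : ℝ} (ha : 0 < a) (hb : 0 < b) :
    ∫⁻ v in Ioi (0:ℝ), ENNReal.ofReal (v ^ (a - 1) * (1 + v) ^ (-(a + b)))
      = ENNReal.ofReal (Real.Gamma a * Real.Gamma b / Real.Gamma (a + b)) := by
  have hG : 0 < Real.Gamma (a + b) := Real.Gamma_pos_of_pos (by linarith)
  have hGa : 0 < Real.Gamma a := Real.Gamma_pos_of_pos ha
  have hGb : 0 < Real.Gamma b := Real.Gamma_pos_of_pos hb
  have key : ENNReal.ofReal (Real.Gamma (a + b))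
        * ∫⁻ v in Ioi (0:ℝ), ENNReal.ofReal (v ^ (a - 1) * (1 + v) ^ (-(a + b)))
      = ENNReal.ofReal (Real.Gamma a) * ENNReal.ofReal (Real.Gamma b) := by
    calc ENNReal.ofReal (Real.Gamma (a + b))
            * ∫⁻ v in Ioi (0:ℝ), ENNReal.ofReal (v ^ (a - 1) * (1 + v) ^ (-(a + b)))
        = ∫⁻ v in Ioi (0:ℝ), ENNReal.ofReal (Real.Gamma (a + b))
            * ENNReal.ofReal (v ^ (a - 1) * (1 + v) ^ (-(a + b))) := by
          rw [← lintegral_const_mul' _ _ ENNReal.ofReal_ne_top]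
      _ = ∫⁻ v in Ioi (0:ℝ), ∫⁻ t in Ioi (0:ℝ),
            ENNReal.ofReal (v ^ (a - 1) * (t ^ (a + b - 1) * Real.exp (-((1 + v) * t)))) := by
          refine setLIntegral_congr_fun measurableSet_Ioi (fun v hv => ?_)
          have hv' : (0:ℝ) < v := hv
          have h1v : (0:ℝ) < 1 + v := by linarith
          rw [ENNReal.ofReal_mul (by positivity)]
          calc ENNReal.ofReal (Real.Gamma (a+b))
                  * (ENNReal.ofReal (v ^ (a-1)) * ENNReal.ofReal ((1+v) ^ (-(a+b))))
              = ENNReal.ofReal (v ^ (a-1))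
                  * ENNReal.ofReal (Real.Gamma (a+b) * (1+v) ^ (-(a+b))) := by
                rw [ENNReal.ofReal_mul hG.le]; ring
            _ = ENNReal.ofReal (v ^ (a-1))
                  * ∫⁻ t in Ioi (0:ℝ), ENNReal.ofReal (t ^ (a+b-1) * Real.exp (-((1+v) * t))) := by
                rw [lint_gamma (by linarith) h1v]
            _ = ∫⁻ t in Ioi (0:ℝ),
                  ENNReal.ofReal (v ^ (a-1) * (t ^ (a+b-1) * Real.exp (-((1+v) * t)))) := by
                rw [← lintegral_const_mul' _ _ ENNReal.ofReal_ne_top]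
                refine setLIntegral_congr_fun measurableSet_Ioi (fun t ht => ?_)
                have ht' : (0:ℝ) < t := ht
                rw [← ENNReal.ofReal_mul (by positivity)]
      _ = ∫⁻ t in Ioi (0:ℝ), ∫⁻ v in Ioi (0:ℝ),
            ENNReal.ofReal (v ^ (a - 1) * (t ^ (a + b - 1) * Real.exp (-((1 + v) * t)))) := by
          refine lintegral_lintegral_swap ?_
          apply Measurable.aemeasurable
          fun_prop
      _ = ∫⁻ t in Ioi (0:ℝ), ENNReal.ofReal (Real.Gamma a)
            * ENNReal.ofReal (t ^ (b - 1) * Real.exp (-(1 * t))) := by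
          refine setLIntegral_congr_fun measurableSet_Ioi (fun t ht => ?_)
          have ht' : (0:ℝ) < t := ht
          calc ∫⁻ v in Ioi (0:ℝ),
                ENNReal.ofReal (v ^ (a - 1) * (t ^ (a + b - 1) * Real.exp (-((1 + v) * t))))
              = ∫⁻ v in Ioi (0:ℝ), ENNReal.ofReal (t ^ (a+b-1) * Real.exp (-t))
                  * ENNReal.ofReal (v ^ (a-1) * Real.exp (-(t * v))) := by
                refine setLIntegral_congr_fun measurableSet_Ioi (fun v hv => ?_)
                have hv' : (0:ℝ) < v := hv
                rw [← ENNReal.ofReal_mul (by positivity)]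
                congr 1
                rw [show -((1+v)*t) = -t + -(t*v) by ring, Real.exp_add]
                ring
            _ = ENNReal.ofReal (t ^ (a+b-1) * Real.exp (-t))
                  * ENNReal.ofReal (Real.Gamma a * t ^ (-a)) := by
                rw [lintegral_const_mul' _ _ ENNReal.ofReal_ne_top, lint_gamma ha ht']
            _ = ENNReal.ofReal (Real.Gamma a)
                  * ENNReal.ofReal (t ^ (b - 1) * Real.exp (-(1 * t))) := by
                rw [← ENNReal.ofReal_mul (by positivity), ← ENNReal.ofReal_mul hGa.le]
                congr 1
                have hpow : t ^ (a+b-1) * t ^ (-a) = t ^ (b-1) := by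
                  rw [← Real.rpow_add ht']; congr 1; ring
                rw [one_mul]
                calc t ^ (a+b-1) * Real.exp (-t) * (Real.Gamma a * t ^ (-a))
                    = Real.Gamma a * ((t ^ (a+b-1) * t ^ (-a)) * Real.exp (-t)) := by ring
                  _ = Real.Gamma a * (t ^ (b-1) * Real.exp (-t)) := by rw [hpow]
      _ = ENNReal.ofReal (Real.Gamma a) * ENNReal.ofReal (Real.Gamma b) := by
          rw [lintegral_const_mul' _ _ ENNReal.ofReal_ne_top, lint_gamma hb one_pos,
            Real.one_rpow, mul_one]
  have hrw : ENNReal.ofReal (Real.Gamma a * Real.Gamma b / Real.Gamma (a + b))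
      = ENNReal.ofReal (Real.Gamma a) * ENNReal.ofReal (Real.Gamma b)
        / ENNReal.ofReal (Real.Gamma (a + b)) := by
    rw [ENNReal.ofReal_div_of_pos hG, ENNReal.ofReal_mul hGa.le]
  rw [hrw, ENNReal.eq_div_iff (ne_of_gt (ENNReal.ofReal_pos.mpr hG)) ENNReal.ofReal_ne_top]
  exact key

variable {E : Type*} [NormedAddCommGroup E] [InnerProductSpace ℝ E]
  [FiniteDimensional ℝ E] [MeasurableSpace E] [BorelSpace E]

private lemma integrable_gauss {c : ℝ} (hc : 0 < c) :
    Integrable (fun y : E => Real.exp (-(c * ‖y‖ ^ 2))) := by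
  have h := (GaussianFourier.integrable_cexp_neg_mul_sq_norm_add (V := E) (b := (c:ℂ))
    (by simpa using hc) 0 (0:E)).norm
  refine h.congr (ae_of_all _ fun y => ?_)
  simp [Complex.norm_exp, neg_mul]
  left; norm_cast

private lemma lint_gauss {c : ℝ} (hc : 0 < c) (z : E) :
    ∫⁻ y : E, ENNReal.ofReal (Real.exp (-(c * ‖y - z‖ ^ 2)))
      = ENNReal.ofReal ((π / c) ^ ((Module.finrank ℝ E : ℝ) / 2)) := by
  have htrans : ∫⁻ y : E, ENNReal.ofReal (Real.exp (-(c * ‖y - z‖ ^ 2)))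
      = ∫⁻ y : E, ENNReal.ofReal (Real.exp (-(c * ‖y‖ ^ 2))) :=
    lintegral_sub_right_eq_self (fun y : E => ENNReal.ofReal (Real.exp (-(c * ‖y‖ ^ 2)))) z
  rw [htrans, ← ofReal_integral_eq_lintegral_ofReal (integrable_gauss hc)
    (ae_of_all _ fun y => (Real.exp_pos _).le)]
  congr 1
  have h := GaussianFourier.integral_rexp_neg_mul_sq_norm (V := E) hc
  simpa [neg_mul] using h

omit [FiniteDimensional ℝ E] [MeasurableSpace E] [BorelSpace E] in
private lemma sq_complete (x y : E) {u t : ℝ} (hu : 0 < u) (ht : 0 < t) :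
    u * ‖x - y‖ ^ 2 + t * ‖y‖ ^ 2
      = (u + t) * ‖y - (u / (u + t)) • x‖ ^ 2 + u * t / (u + t) * ‖x‖ ^ 2 := by
  have hut : u + t ≠ 0 := by positivity
  rw [norm_sub_sq_real, norm_sub_sq_real, real_inner_smul_right, norm_smul]
  simp only [Real.norm_eq_abs, mul_pow, sq_abs]
  rw [real_inner_comm x y]
  field_simp
  ring

private lemma ofReal_inv_cancel {r : ℝ} (hr : 0 < r) (s : ℝ) :
    (ENNReal.ofReal r)⁻¹ * ENNReal.ofReal (r * s) = ENNReal.ofReal s := by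
  rw [ENNReal.ofReal_mul hr.le, ← mul_assoc,
    ENNReal.inv_mul_cancel (ENNReal.ofReal_pos.2 hr).ne' ENNReal.ofReal_ne_top, one_mul]

end BubbleAux

/-- `I(γ) := π^{n/2} Γ((n-2γ)/2)/Γ(n-γ)` for `0 < γ < n/2`. -/
noncomputable def bubbleI (n : ℕ) (γ : ℝ) : ℝ :=
  Real.pi ^ ((n : ℝ) / 2) * Real.Gamma (((n : ℝ) - 2 * γ) / 2) / Real.Gamma ((n : ℝ) - γ)

set_option maxHeartbeats 2000000 in
/-- Bubble integral identity: for `0 < γ < n/2`,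
`∫ |x-y|^{-2γ} (1+|y|²)^{-(n-γ)} dy = I(γ) (1+|x|²)^{-γ}`. -/
theorem stmt_10 (n : ℕ) (hn : 1 ≤ n) (γ : ℝ) (hγ0 : 0 < γ) (hγ : 2 * γ < n)
    (x : EuclideanSpace ℝ (Fin n)) :
    ∫ y : EuclideanSpace ℝ (Fin n),
        (1 / ‖x - y‖ ^ (2 * γ)) * (1 / (1 + ‖y‖ ^ 2)) ^ ((n : ℝ) - γ) =
      bubbleI n γ * (1 / (1 + ‖x‖ ^ 2)) ^ γ := by
  haveI : Nonempty (Fin n) := ⟨⟨0, hn⟩⟩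
  haveI : Nontrivial (EuclideanSpace ℝ (Fin n)) := by
    refine ⟨0, EuclideanSpace.single (Classical.arbitrary (Fin n)) 1, fun h => ?_⟩
    have := congrArg (fun v : EuclideanSpace ℝ (Fin n) => ‖v‖) h
    simp [EuclideanSpace.norm_single] at this
  have hn' : (0:ℝ) < n := by exact_mod_cast Nat.pos_of_ne_zero (by omega)
  have hγn2 : 2 * γ < (n:ℝ) := by exact_mod_cast hγ
  have hγn : γ < (n:ℝ) := by linarith
  have hnγ : 0 < (n:ℝ) - γ := by linarith
  have h2 : 0 < (n:ℝ)/2 - γ := by linarith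
  have hn2 : (0:ℝ) < (n:ℝ)/2 := by positivity
  have hc : (0:ℝ) < 1 + ‖x‖ ^ 2 := by positivity
  have hGγ : 0 < Real.Gamma γ := Real.Gamma_pos_of_pos hγ0
  have hGnγ : 0 < Real.Gamma ((n:ℝ) - γ) := Real.Gamma_pos_of_pos hnγ
  have hGn2 : 0 < Real.Gamma ((n:ℝ)/2) := Real.Gamma_pos_of_pos hn2
  have hGb : 0 < Real.Gamma ((n:ℝ)/2 - γ) := Real.Gamma_pos_of_pos h2
  have hf : ∀ y : EuclideanSpace ℝ (Fin n),
      (1 / ‖x - y‖ ^ (2 * γ)) * (1 / (1 + ‖y‖ ^ 2)) ^ ((n : ℝ) - γ)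
        = ‖x - y‖ ^ (-(2 * γ)) * (1 + ‖y‖ ^ 2) ^ (-((n:ℝ) - γ)) := by
    intro y
    have h1 : (0:ℝ) < 1 + ‖y‖ ^ 2 := by positivity
    rw [one_div, one_div, ← Real.rpow_neg (norm_nonneg _),
      Real.inv_rpow h1.le, ← Real.rpow_neg h1.le]
  have hRnn : 0 ≤ bubbleI n γ * (1 / (1 + ‖x‖ ^ 2)) ^ γ := by
    have : 0 < Real.Gamma (((n:ℝ) - 2 * γ)/2) := Real.Gamma_pos_of_pos (by linarith)
    have hπ : (0:ℝ) < π := pi_pos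
    unfold bubbleI
    positivity
  -- a.e. y ≠ x
  have hae : ∀ᵐ (y : EuclideanSpace ℝ (Fin n)), y ≠ x := by
    rw [MeasureTheory.ae_iff]
    have hset : {y : EuclideanSpace ℝ (Fin n) | ¬ y ≠ x} = {x} := by ext y; simp
    rw [hset]
    exact measure_singleton x
  -- Step A : pointwise double Gamma representation
  have stepA : ∀ y : EuclideanSpace ℝ (Fin n), y ≠ x →
      ENNReal.ofReal (‖x - y‖ ^ (-(2*γ)) * (1 + ‖y‖^2) ^ (-((n:ℝ) - γ)))
        = ((ENNReal.ofReal (Real.Gamma γ))⁻¹ * (ENNReal.ofReal (Real.Gamma ((n:ℝ)-γ)))⁻¹)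
          * ∫⁻ u in Ioi (0:ℝ), ∫⁻ t in Ioi (0:ℝ),
              ENNReal.ofReal (u ^ (γ-1) * t ^ ((n:ℝ)-γ-1)
                * Real.exp (-(u * ‖x - y‖^2 + t * (1 + ‖y‖^2)))) := by
    intro y hy
    have hxy : (0:ℝ) < ‖x - y‖ := by
      rw [norm_pos_iff, sub_ne_zero]; exact Ne.symm hy
    have h1y : (0:ℝ) < 1 + ‖y‖^2 := by positivity
    have hprod : ∫⁻ u in Ioi (0:ℝ), ∫⁻ t in Ioi (0:ℝ),
          ENNReal.ofReal (u ^ (γ-1) * t ^ ((n:ℝ)-γ-1)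
            * Real.exp (-(u * ‖x - y‖^2 + t * (1 + ‖y‖^2))))
        = (∫⁻ u in Ioi (0:ℝ), ENNReal.ofReal (u ^ (γ-1) * Real.exp (-(‖x - y‖^2 * u))))
          * (∫⁻ t in Ioi (0:ℝ),
              ENNReal.ofReal (t ^ ((n:ℝ)-γ-1) * Real.exp (-((1 + ‖y‖^2) * t)))) := by
      rw [← lintegral_lintegral_mul (Measurable.aemeasurable (by fun_prop))
        (Measurable.aemeasurable (by fun_prop))]
      refine setLIntegral_congr_fun measurableSet_Ioi (fun u hu => ?_)
      refine setLIntegral_congr_fun measurableSet_Ioi (fun t ht => ?_)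
      have hu' : (0:ℝ) < u := hu
      have ht' : (0:ℝ) < t := ht
      rw [← ENNReal.ofReal_mul (by positivity)]
      congr 1
      rw [show -(u * ‖x - y‖^2 + t * (1 + ‖y‖^2))
        = -(‖x - y‖^2 * u) + -((1 + ‖y‖^2) * t) by ring, Real.exp_add]
      ring
    rw [hprod, lint_gamma hγ0 (by positivity), lint_gamma hnγ h1y]
    have hpow1 : (‖x - y‖^2 : ℝ) ^ (-γ) = ‖x - y‖ ^ (-(2*γ)) := by
      rw [← Real.rpow_natCast ‖x - y‖ 2, ← Real.rpow_mul (norm_nonneg _)]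
      congr 1; push_cast; ring
    rw [mul_mul_mul_comm, ofReal_inv_cancel hGγ, ofReal_inv_cancel hGnγ, hpow1,
      ← ENNReal.ofReal_mul (by positivity)]
  -- Step C : Gaussian integral over y, for u, t > 0
  have stepC : ∀ u t : ℝ, 0 < u → 0 < t →
      ∫⁻ y : EuclideanSpace ℝ (Fin n),
          ENNReal.ofReal (u ^ (γ-1) * t ^ ((n:ℝ)-γ-1)
            * Real.exp (-(u * ‖x - y‖^2 + t * (1 + ‖y‖^2))))
        = ENNReal.ofReal (u ^ (γ-1) * t ^ ((n:ℝ)-γ-1) * Real.exp (-t)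
            * ((π/(u+t)) ^ ((n:ℝ)/2) * Real.exp (-(u*t/(u+t) * ‖x‖^2)))) := by
    intro u t hu' ht'
    have hut : (0:ℝ) < u + t := by linarith
    have hfr : ((Module.finrank ℝ (EuclideanSpace ℝ (Fin n)) : ℕ) : ℝ) = (n:ℝ) := by
      rw [finrank_euclideanSpace_fin]
    have hexp : ∀ y : EuclideanSpace ℝ (Fin n),
        -(u * ‖x - y‖^2 + t * (1 + ‖y‖^2))
          = (-((u+t) * ‖y - (u/(u+t)) • x‖^2)) + (-t + -(u*t/(u+t) * ‖x‖^2)) := by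
      intro y
      have h := sq_complete x y hu' ht'
      nlinarith [h]
    calc ∫⁻ y : EuclideanSpace ℝ (Fin n),
          ENNReal.ofReal (u ^ (γ-1) * t ^ ((n:ℝ)-γ-1)
            * Real.exp (-(u * ‖x - y‖^2 + t * (1 + ‖y‖^2))))
        = ∫⁻ y : EuclideanSpace ℝ (Fin n),
            ENNReal.ofReal (u ^ (γ-1) * t ^ ((n:ℝ)-γ-1) * Real.exp (-t)
              * Real.exp (-(u*t/(u+t) * ‖x‖^2)))
            * ENNReal.ofReal (Real.exp (-((u+t) * ‖y - (u/(u+t)) • x‖^2))) := by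
          refine lintegral_congr fun y => ?_
          rw [← ENNReal.ofReal_mul (by positivity)]
          congr 1
          rw [hexp y, Real.exp_add, Real.exp_add]
          ring
      _ = ENNReal.ofReal (u ^ (γ-1) * t ^ ((n:ℝ)-γ-1) * Real.exp (-t)
              * Real.exp (-(u*t/(u+t) * ‖x‖^2)))
            * ENNReal.ofReal ((π/(u+t)) ^ ((n:ℝ)/2)) := by
          rw [lintegral_const_mul' _ _ ENNReal.ofReal_ne_top, lint_gauss hut, hfr]
      _ = ENNReal.ofReal (u ^ (γ-1) * t ^ ((n:ℝ)-γ-1) * Real.exp (-t)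
            * ((π/(u+t)) ^ ((n:ℝ)/2) * Real.exp (-(u*t/(u+t) * ‖x‖^2)))) := by
          rw [← ENNReal.ofReal_mul (by positivity)]
          congr 1; ring
  -- Step E : scaling substitution u = t * s, for t > 0
  have stepE : ∀ t : ℝ, 0 < t →
      ∫⁻ u in Ioi (0:ℝ), ENNReal.ofReal (u ^ (γ-1) * t ^ ((n:ℝ)-γ-1) * Real.exp (-t)
            * ((π/(u+t)) ^ ((n:ℝ)/2) * Real.exp (-(u*t/(u+t) * ‖x‖^2))))
        = ∫⁻ s in Ioi (0:ℝ), ENNReal.ofReal (π ^ ((n:ℝ)/2) * (s ^ (γ-1)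
            * ((1+s) ^ (-((n:ℝ)/2)) * (t ^ ((n:ℝ)/2-1)
              * Real.exp (-((1 + s/(1+s) * ‖x‖^2) * t)))))) := by
    intro t ht'
    rw [lint_scale _ (by fun_prop) ht', ← lintegral_const_mul' _ _ ENNReal.ofReal_ne_top]
    refine setLIntegral_congr_fun measurableSet_Ioi (fun s hs => ?_)
    have hs' : (0:ℝ) < s := hs
    have h1s : (0:ℝ) < 1 + s := by linarith
    rw [← ENNReal.ofReal_mul ht'.le]
    congr 1
    have hts : t * s + t = t * (1 + s) := by ring
    rw [hts, Real.mul_rpow ht'.le hs'.le, Real.div_rpow pi_nonneg (by positivity),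
      Real.mul_rpow ht'.le h1s.le]
    have hearg : t * s * t / (t * (1 + s)) * ‖x‖^2 = s/(1+s) * ‖x‖^2 * t := by
      field_simp
    have hexp2 : Real.exp (-t) * Real.exp (-(s/(1+s) * ‖x‖^2 * t))
        = Real.exp (-((1 + s/(1+s) * ‖x‖^2) * t)) := by
      rw [← Real.exp_add]; congr 1; ring
    have hT : t ^ (γ-1) * t ^ ((n:ℝ)-γ-1) * t * (t ^ ((n:ℝ)/2))⁻¹ = t ^ ((n:ℝ)/2-1) := by
      have h : t ^ (γ-1) * t ^ ((n:ℝ)-γ-1) * t * (t ^ ((n:ℝ)/2))⁻¹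
          = t ^ ((γ-1) + (((n:ℝ)-γ-1) + (1 + -((n:ℝ)/2)))) := by
        rw [Real.rpow_add ht', Real.rpow_add ht', Real.rpow_add ht', Real.rpow_one,
          Real.rpow_neg ht'.le]
        ring
      rw [h]; congr 1; ring
    have hSnn : (1+s) ^ (-((n:ℝ)/2)) = ((1+s) ^ ((n:ℝ)/2))⁻¹ := Real.rpow_neg h1s.le _
    rw [hearg, hSnn, ← hexp2, ← hT]
    field_simp
  -- Step F : final Beta evaluation
  have stepF : ∫⁻ s in Ioi (0:ℝ), ∫⁻ t in Ioi (0:ℝ),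
        ENNReal.ofReal (π ^ ((n:ℝ)/2) * (s ^ (γ-1)
          * ((1+s) ^ (-((n:ℝ)/2)) * (t ^ ((n:ℝ)/2-1)
            * Real.exp (-((1 + s/(1+s) * ‖x‖^2) * t))))))
      = ENNReal.ofReal (π ^ ((n:ℝ)/2)) * (ENNReal.ofReal (Real.Gamma ((n:ℝ)/2))
          * (ENNReal.ofReal ((1+‖x‖^2) ^ (1-γ)) * ((ENNReal.ofReal (1+‖x‖^2))⁻¹
            * ENNReal.ofReal (Real.Gamma γ * Real.Gamma ((n:ℝ)/2 - γ)
                / Real.Gamma ((n:ℝ)/2))))) := by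
    calc ∫⁻ s in Ioi (0:ℝ), ∫⁻ t in Ioi (0:ℝ), ENNReal.ofReal (π ^ ((n:ℝ)/2) * (s ^ (γ-1)
            * ((1+s) ^ (-((n:ℝ)/2)) * (t ^ ((n:ℝ)/2-1)
              * Real.exp (-((1 + s/(1+s) * ‖x‖^2) * t))))))
        = ∫⁻ s in Ioi (0:ℝ), ENNReal.ofReal (π ^ ((n:ℝ)/2))
            * (ENNReal.ofReal (Real.Gamma ((n:ℝ)/2))
              * ENNReal.ofReal (s ^ (γ-1) * (1 + (1+‖x‖^2)*s) ^ (-((n:ℝ)/2)))) := by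
          refine setLIntegral_congr_fun measurableSet_Ioi (fun s hs => ?_)
          have hs' : (0:ℝ) < s := hs
          have h1s : (0:ℝ) < 1 + s := by linarith
          have hA : (0:ℝ) < 1 + s/(1+s) * ‖x‖^2 := by positivity
          calc ∫⁻ t in Ioi (0:ℝ), ENNReal.ofReal (π ^ ((n:ℝ)/2) * (s ^ (γ-1)
                  * ((1+s) ^ (-((n:ℝ)/2)) * (t ^ ((n:ℝ)/2-1)
                    * Real.exp (-((1 + s/(1+s) * ‖x‖^2) * t))))))
              = ∫⁻ t in Ioi (0:ℝ), ENNReal.ofReal (π ^ ((n:ℝ)/2) * (s ^ (γ-1)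
                  * (1+s) ^ (-((n:ℝ)/2))))
                  * ENNReal.ofReal (t ^ ((n:ℝ)/2-1)
                    * Real.exp (-((1 + s/(1+s) * ‖x‖^2) * t))) := by
                refine setLIntegral_congr_fun measurableSet_Ioi (fun t ht => ?_)
                have ht' : (0:ℝ) < t := ht
                rw [← ENNReal.ofReal_mul (by positivity)]
                congr 1; ring
            _ = ENNReal.ofReal (π ^ ((n:ℝ)/2) * (s ^ (γ-1) * (1+s) ^ (-((n:ℝ)/2))))
                  * ENNReal.ofReal (Real.Gamma ((n:ℝ)/2)
                    * (1 + s/(1+s) * ‖x‖^2) ^ (-((n:ℝ)/2))) := by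
                rw [lintegral_const_mul' _ _ ENNReal.ofReal_ne_top, lint_gamma hn2 hA]
            _ = ENNReal.ofReal (π ^ ((n:ℝ)/2)) * (ENNReal.ofReal (Real.Gamma ((n:ℝ)/2))
                  * ENNReal.ofReal (s ^ (γ-1) * (1 + (1+‖x‖^2)*s) ^ (-((n:ℝ)/2)))) := by
                have hcomb : (1+s) ^ (-((n:ℝ)/2)) * (1 + s/(1+s) * ‖x‖^2) ^ (-((n:ℝ)/2))
                    = (1 + (1+‖x‖^2)*s) ^ (-((n:ℝ)/2)) := by
                  rw [← Real.mul_rpow h1s.le hA.le]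
                  congr 1; field_simp; ring
                rw [← ENNReal.ofReal_mul (by positivity), ← ENNReal.ofReal_mul (by positivity),
                  ← ENNReal.ofReal_mul (by positivity)]
                congr 1
                rw [← hcomb]; ring
      _ = ENNReal.ofReal (π ^ ((n:ℝ)/2)) * (ENNReal.ofReal (Real.Gamma ((n:ℝ)/2))
            * ∫⁻ s in Ioi (0:ℝ),
                ENNReal.ofReal (s ^ (γ-1) * (1 + (1+‖x‖^2)*s) ^ (-((n:ℝ)/2)))) := by
          rw [lintegral_const_mul' _ _ ENNReal.ofReal_ne_top,
            lintegral_const_mul' _ _ ENNReal.ofReal_ne_top]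
      _ = ENNReal.ofReal (π ^ ((n:ℝ)/2)) * (ENNReal.ofReal (Real.Gamma ((n:ℝ)/2))
            * (ENNReal.ofReal ((1+‖x‖^2) ^ (1-γ)) * ((ENNReal.ofReal (1+‖x‖^2))⁻¹
              * ENNReal.ofReal (Real.Gamma γ * Real.Gamma ((n:ℝ)/2 - γ)
                  / Real.Gamma ((n:ℝ)/2))))) := by
          congr 1
          congr 1
          calc ∫⁻ s in Ioi (0:ℝ), ENNReal.ofReal (s ^ (γ-1) * (1 + (1+‖x‖^2)*s) ^ (-((n:ℝ)/2)))
              = ∫⁻ s in Ioi (0:ℝ), ENNReal.ofReal ((1+‖x‖^2) ^ (1-γ))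
                  * ENNReal.ofReal (((1+‖x‖^2)*s) ^ (γ-1)
                    * (1 + (1+‖x‖^2)*s) ^ (-((n:ℝ)/2))) := by
                refine setLIntegral_congr_fun measurableSet_Ioi (fun s hs => ?_)
                have hs' : (0:ℝ) < s := hs
                rw [← ENNReal.ofReal_mul (by positivity)]
                congr 1
                rw [Real.mul_rpow hc.le hs'.le, ← mul_assoc, ← mul_assoc,
                  ← Real.rpow_add hc]
                norm_num
            _ = ENNReal.ofReal ((1+‖x‖^2) ^ (1-γ)) * ((ENNReal.ofReal (1+‖x‖^2))⁻¹
                  * ENNReal.ofReal (Real.Gamma γ * Real.Gamma ((n:ℝ)/2 - γ)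
                      / Real.Gamma ((n:ℝ)/2))) := by
                rw [lintegral_const_mul' _ _ ENNReal.ofReal_ne_top]
                congr 1
                have hsc := lint_scale
                  (fun v => ENNReal.ofReal (v ^ (γ-1) * (1 + v) ^ (-((n:ℝ)/2))))
                  (by fun_prop) hc
                have hb := lint_beta hγ0 h2
                rw [show γ + ((n:ℝ)/2 - γ) = (n:ℝ)/2 by ring] at hb
                rw [← hb, hsc, ← mul_assoc, ENNReal.inv_mul_cancel
                  (ENNReal.ofReal_pos.2 hc).ne' ENNReal.ofReal_ne_top, one_mul]
  -- main computation
  have hMain : ∫⁻ y : EuclideanSpace ℝ (Fin n),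
      ENNReal.ofReal (‖x - y‖ ^ (-(2 * γ)) * (1 + ‖y‖ ^ 2) ^ (-((n:ℝ) - γ)))
      = ENNReal.ofReal (bubbleI n γ * (1 / (1 + ‖x‖ ^ 2)) ^ γ) := by
    have hCt : ((ENNReal.ofReal (Real.Gamma γ))⁻¹
        * (ENNReal.ofReal (Real.Gamma ((n:ℝ)-γ)))⁻¹) ≠ ⊤ :=
      ENNReal.mul_ne_top (ENNReal.inv_ne_top.2 (ENNReal.ofReal_pos.2 hGγ).ne')
        (ENNReal.inv_ne_top.2 (ENNReal.ofReal_pos.2 hGnγ).ne')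
    calc ∫⁻ y : EuclideanSpace ℝ (Fin n),
          ENNReal.ofReal (‖x - y‖ ^ (-(2 * γ)) * (1 + ‖y‖ ^ 2) ^ (-((n:ℝ) - γ)))
        = ∫⁻ y : EuclideanSpace ℝ (Fin n),
            ((ENNReal.ofReal (Real.Gamma γ))⁻¹ * (ENNReal.ofReal (Real.Gamma ((n:ℝ)-γ)))⁻¹)
            * ∫⁻ u in Ioi (0:ℝ), ∫⁻ t in Ioi (0:ℝ),
                ENNReal.ofReal (u ^ (γ-1) * t ^ ((n:ℝ)-γ-1)
                  * Real.exp (-(u * ‖x - y‖^2 + t * (1 + ‖y‖^2)))) := by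
          refine lintegral_congr_ae (hae.mono fun y hy => ?_)
          exact stepA y hy
      _ = ((ENNReal.ofReal (Real.Gamma γ))⁻¹ * (ENNReal.ofReal (Real.Gamma ((n:ℝ)-γ)))⁻¹)
          * ∫⁻ y : EuclideanSpace ℝ (Fin n), ∫⁻ u in Ioi (0:ℝ), ∫⁻ t in Ioi (0:ℝ),
              ENNReal.ofReal (u ^ (γ-1) * t ^ ((n:ℝ)-γ-1)
                * Real.exp (-(u * ‖x - y‖^2 + t * (1 + ‖y‖^2)))) := by
          rw [lintegral_const_mul' _ _ hCt]
      _ = ((ENNReal.ofReal (Real.Gamma γ))⁻¹ * (ENNReal.ofReal (Real.Gamma ((n:ℝ)-γ)))⁻¹)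
          * ∫⁻ u in Ioi (0:ℝ), ∫⁻ y : EuclideanSpace ℝ (Fin n), ∫⁻ t in Ioi (0:ℝ),
              ENNReal.ofReal (u ^ (γ-1) * t ^ ((n:ℝ)-γ-1)
                * Real.exp (-(u * ‖x - y‖^2 + t * (1 + ‖y‖^2)))) := by
          congr 1
          refine lintegral_lintegral_swap ?_
          refine Measurable.aemeasurable ?_
          refine Measurable.lintegral_prod_right'
            (f := fun p : (EuclideanSpace ℝ (Fin n) × ℝ) × ℝ =>
              ENNReal.ofReal (p.1.2 ^ (γ-1) * p.2 ^ ((n:ℝ)-γ-1)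
                * Real.exp (-(p.1.2 * ‖x - p.1.1‖^2 + p.2 * (1 + ‖p.1.1‖^2))))) ?_
          fun_prop
      _ = ((ENNReal.ofReal (Real.Gamma γ))⁻¹ * (ENNReal.ofReal (Real.Gamma ((n:ℝ)-γ)))⁻¹)
          * ∫⁻ u in Ioi (0:ℝ), ∫⁻ t in Ioi (0:ℝ), ∫⁻ y : EuclideanSpace ℝ (Fin n),
              ENNReal.ofReal (u ^ (γ-1) * t ^ ((n:ℝ)-γ-1)
                * Real.exp (-(u * ‖x - y‖^2 + t * (1 + ‖y‖^2)))) := by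
          congr 1
          refine lintegral_congr fun u => ?_
          refine lintegral_lintegral_swap (Measurable.aemeasurable (by fun_prop))
      _ = ((ENNReal.ofReal (Real.Gamma γ))⁻¹ * (ENNReal.ofReal (Real.Gamma ((n:ℝ)-γ)))⁻¹)
          * ∫⁻ u in Ioi (0:ℝ), ∫⁻ t in Ioi (0:ℝ),
              ENNReal.ofReal (u ^ (γ-1) * t ^ ((n:ℝ)-γ-1) * Real.exp (-t)
                * ((π/(u+t)) ^ ((n:ℝ)/2) * Real.exp (-(u*t/(u+t) * ‖x‖^2)))) := by
          congr 1
          refine setLIntegral_congr_fun measurableSet_Ioi (fun u hu => ?_)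
          refine setLIntegral_congr_fun measurableSet_Ioi (fun t ht => ?_)
          exact stepC u t hu ht
      _ = ((ENNReal.ofReal (Real.Gamma γ))⁻¹ * (ENNReal.ofReal (Real.Gamma ((n:ℝ)-γ)))⁻¹)
          * ∫⁻ t in Ioi (0:ℝ), ∫⁻ u in Ioi (0:ℝ),
              ENNReal.ofReal (u ^ (γ-1) * t ^ ((n:ℝ)-γ-1) * Real.exp (-t)
                * ((π/(u+t)) ^ ((n:ℝ)/2) * Real.exp (-(u*t/(u+t) * ‖x‖^2)))) := by
          congr 1
          refine lintegral_lintegral_swap ?_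
          refine Measurable.aemeasurable ?_
          fun_prop
      _ = ((ENNReal.ofReal (Real.Gamma γ))⁻¹ * (ENNReal.ofReal (Real.Gamma ((n:ℝ)-γ)))⁻¹)
          * ∫⁻ t in Ioi (0:ℝ), ∫⁻ s in Ioi (0:ℝ),
              ENNReal.ofReal (π ^ ((n:ℝ)/2) * (s ^ (γ-1)
                * ((1+s) ^ (-((n:ℝ)/2)) * (t ^ ((n:ℝ)/2-1)
                  * Real.exp (-((1 + s/(1+s) * ‖x‖^2) * t)))))) := by
          congr 1
          refine setLIntegral_congr_fun measurableSet_Ioi (fun t ht => ?_)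
          exact stepE t ht
      _ = ((ENNReal.ofReal (Real.Gamma γ))⁻¹ * (ENNReal.ofReal (Real.Gamma ((n:ℝ)-γ)))⁻¹)
          * ∫⁻ s in Ioi (0:ℝ), ∫⁻ t in Ioi (0:ℝ),
              ENNReal.ofReal (π ^ ((n:ℝ)/2) * (s ^ (γ-1)
                * ((1+s) ^ (-((n:ℝ)/2)) * (t ^ ((n:ℝ)/2-1)
                  * Real.exp (-((1 + s/(1+s) * ‖x‖^2) * t)))))) := by
          congr 1
          refine lintegral_lintegral_swap ?_
          refine Measurable.aemeasurable ?_
          fun_prop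
      _ = ((ENNReal.ofReal (Real.Gamma γ))⁻¹ * (ENNReal.ofReal (Real.Gamma ((n:ℝ)-γ)))⁻¹)
          * (ENNReal.ofReal (π ^ ((n:ℝ)/2)) * (ENNReal.ofReal (Real.Gamma ((n:ℝ)/2))
              * (ENNReal.ofReal ((1+‖x‖^2) ^ (1-γ)) * ((ENNReal.ofReal (1+‖x‖^2))⁻¹
                * ENNReal.ofReal (Real.Gamma γ * Real.Gamma ((n:ℝ)/2 - γ)
                    / Real.Gamma ((n:ℝ)/2)))))) := by
          rw [stepF]
      _ = ENNReal.ofReal (bubbleI n γ * (1 / (1 + ‖x‖ ^ 2)) ^ γ) := by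
          have hreal : bubbleI n γ * (1 / (1 + ‖x‖^2)) ^ γ
              = (Real.Gamma γ)⁻¹ * ((Real.Gamma ((n:ℝ)-γ))⁻¹ * (π ^ ((n:ℝ)/2)
                  * (Real.Gamma ((n:ℝ)/2) * ((1+‖x‖^2) ^ (1-γ) * ((1+‖x‖^2)⁻¹
                    * (Real.Gamma γ * Real.Gamma ((n:ℝ)/2 - γ)
                      / Real.Gamma ((n:ℝ)/2))))))) := by
            have hcc : (1+‖x‖^2) ^ (1-γ) * (1+‖x‖^2)⁻¹ = (1 / (1+‖x‖^2)) ^ γ := by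
              rw [one_div, Real.inv_rpow hc.le, ← Real.rpow_neg hc.le]
              rw [show (1+‖x‖^2)⁻¹ = (1+‖x‖^2) ^ (-1 : ℝ) by rw [Real.rpow_neg_one],
                ← Real.rpow_add hc]
              congr 1; ring
            have hGG : Real.Gamma (((n:ℝ) - 2*γ)/2) = Real.Gamma ((n:ℝ)/2 - γ) := by
              congr 1; ring
            have h3 : (1+‖x‖^2) ^ (1-γ) * ((1+‖x‖^2)⁻¹
                  * (Real.Gamma γ * Real.Gamma ((n:ℝ)/2 - γ) / Real.Gamma ((n:ℝ)/2)))
                = (1/(1+‖x‖^2)) ^ γ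
                  * (Real.Gamma γ * Real.Gamma ((n:ℝ)/2 - γ) / Real.Gamma ((n:ℝ)/2)) := by
              rw [← hcc]; ring
            unfold bubbleI
            rw [hGG, h3]
            field_simp
          rw [hreal]
          rw [ENNReal.ofReal_mul (by positivity), ENNReal.ofReal_mul (by positivity),
            ENNReal.ofReal_mul (by positivity), ENNReal.ofReal_mul (by positivity),
            ENNReal.ofReal_mul (by positivity), ENNReal.ofReal_mul (by positivity),
            ENNReal.ofReal_inv_of_pos hGγ, ENNReal.ofReal_inv_of_pos hGnγ,
            ENNReal.ofReal_inv_of_pos hc]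
          ring
  simp_rw [hf]
  rw [MeasureTheory.integral_eq_lintegral_of_nonneg_ae
    (ae_of_all _ fun y => by positivity)
    (Measurable.aestronglyMeasurable (by fun_prop))]
  rw [hMain, ENNReal.toReal_ofReal hRnn]
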